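/- arXiv:2411.14987 — 6 statements merged into one kernel-verified Lean document; each statement's English description precedes it below -/
import Mathlib

section
/- For a family X = (x_i)_{i∈I} of points in an LCA group G, the following are equivalent: (a) there exists a relatively compact zero neighborhood U and a finite B with #{j : (x_i+U)∩(x_j+U) ≠ ∅} ≤ B for all i; (b) for every relatively compact zero neighborhood V there exists finite B_V with #{j : (x_i+V)∩(x_j+V) ≠ ∅} ≤ B_V for all i; (c) the weighted Dirac comb δ_X is translation bounded, i.e., sup_{x∈G} #{i : x_i ∈ x+K} < ∞ for every compact K ⊆ G. -/
open Pointwise MeasureTheory Filter Topology ENNReal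

private lemma encard_biUnion_le' {α I : Type*} (B : ℕ) (T : Finset α) (S : α → Set I)
    (h : ∀ t, (S t).encard ≤ B) : (⋃ t ∈ T, S t).encard ≤ T.card * B := by
  classical
  induction T using Finset.induction_on with
  | empty => simp
  | insert a T ha ih =>
    rw [Finset.set_biUnion_insert]
    calc (S a ∪ ⋃ t ∈ T, S t).encard ≤ (S a).encard + (⋃ t ∈ T, S t).encard :=
          Set.encard_union_le _ _
      _ ≤ (B : ℕ∞) + T.card * B := add_le_add (h a) ih
      _ = ((insert a T).card * B : ℕ) := by
          rw [Finset.card_insert_of_notMem ha]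
          push_cast
          ring

/-- For a point family `X = (x i)` in an LCA group `G`, the following are
equivalent: (a) some relatively compact zero neighborhood `U` has uniformly bounded overlap
counts; (b) every relatively compact zero neighborhood has uniformly bounded overlap counts;
(c) the Dirac comb `δ_X` is translation bounded, i.e. for every compact `K`,
`sup_{g∈G} #{i : x i ∈ g + K} < ∞`. -/
theorem stmt1 {G I : Type*} [AddCommGroup G] [TopologicalSpace G] [IsTopologicalAddGroup G]
    [LocallyCompactSpace G] [T2Space G] (x : I → G) :
    List.TFAE
      [ ∃ U ∈ nhds (0 : G), IsCompact (closure U) ∧ ∃ B : ℕ, ∀ i : I,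
          ({j : I | (((x i) +ᵥ U) ∩ ((x j) +ᵥ U)).Nonempty} : Set I).encard ≤ B,
        ∀ V ∈ nhds (0 : G), IsCompact (closure V) → ∃ B : ℕ, ∀ i : I,
          ({j : I | (((x i) +ᵥ V) ∩ ((x j) +ᵥ V)).Nonempty} : Set I).encard ≤ B,
        ∀ K : Set G, IsCompact K → ∃ C : ℕ, ∀ g : G,
          ({i : I | x i ∈ g +ᵥ K} : Set I).encard ≤ C ] := by
  tfae_have 3 → 2
  · intro h3 V hV hVc
    obtain ⟨C, hC⟩ := h3 (closure V + -(closure V)) (hVc.add hVc.neg)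
    refine ⟨C, fun i => le_trans (Set.encard_le_encard ?_) (hC (x i))⟩
    rintro j ⟨y, ⟨a, ha, hya⟩, ⟨b, hb, hyb⟩⟩
    rw [Set.mem_setOf_eq, Set.mem_vadd_set_iff_neg_vadd_mem]
    have : -(x i) + x j = a + -b := by
      have : x i + a = x j + b := hya.trans hyb.symm
      have := congrArg (fun z => -(x i) + (z + -b)) this
      simpa [add_assoc, add_comm, add_left_comm] using this.symm
    rw [show (-(x i) +ᵥ x j) = -(x i) + x j from rfl, this]
    exact Set.add_mem_add (subset_closure ha) (Set.neg_mem_neg.mpr (subset_closure hb))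
  tfae_have 2 → 1
  · intro h2
    obtain ⟨K, hKc, hK⟩ := exists_compact_mem_nhds (0 : G)
    have hU : interior K ∈ nhds (0 : G) := interior_mem_nhds.mpr hK
    have hUc : IsCompact (closure (interior K)) :=
      hKc.of_isClosed_subset isClosed_closure
        (closure_minimal interior_subset hKc.isClosed)
    exact ⟨interior K, hU, hUc, h2 _ hU hUc⟩
  tfae_have 1 → 3
  · rintro ⟨U, hU, _, B, hB⟩ K hK
    -- cover K by finitely many translates of U
    obtain ⟨T, -, hT⟩ := hK.elim_nhds_subcover (fun t => t +ᵥ U)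
      (fun t _ => by simpa using vadd_mem_nhds_vadd t hU)
    refine ⟨T.card * B, fun g => ?_⟩
    have hsub : ({i : I | x i ∈ g +ᵥ K} : Set I) ⊆
        ⋃ t ∈ T, {i : I | x i ∈ (g + t) +ᵥ U} := by
      intro i hi
      rw [Set.mem_setOf_eq, Set.mem_vadd_set_iff_neg_vadd_mem] at hi
      obtain ⟨t, ht, hxt⟩ := Set.mem_iUnion₂.mp (hT hi)
      refine Set.mem_iUnion₂.mpr ⟨t, ht, ?_⟩
      rw [Set.mem_setOf_eq, Set.mem_vadd_set_iff_neg_vadd_mem]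
      rw [Set.mem_vadd_set_iff_neg_vadd_mem] at hxt
      show -(g + t) + x i ∈ U
      have : -t + (-g + x i) ∈ U := hxt
      convert this using 1
      abel
    refine le_trans (Set.encard_mono hsub) ?_
    refine le_trans (encard_biUnion_le' B T _ ?_) le_rfl
    intro t
    rcases Set.eq_empty_or_nonempty ({i : I | x i ∈ (g + t) +ᵥ U} : Set I) with he | ⟨i0, hi0⟩
    · simp [he]
    · refine le_trans (Set.encard_mono ?_) (hB i0)
      intro j hj
      rw [Set.mem_setOf_eq, Set.mem_vadd_set_iff_neg_vadd_mem] at hj hi0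
      refine ⟨x i0 + (-(g + t) + x j), ?_, ?_⟩
      · exact ⟨-(g + t) + x j, hj, rfl⟩
      · refine ⟨-(g + t) + x i0, hi0, ?_⟩
        show x j + (-(g + t) + x i0) = x i0 + (-(g + t) + x j)
        abel
  tfae_finish
end

section
/- Any two BUPUs Φ (of size U, family X, norm M_Φ) and Ψ (of size V, family Y, norm M_Ψ) on an LCA group G induce equivalent norms on the Wiener algebra: ‖f‖_Ψ ≤ ‖δ_Y‖_{U−V} · M_Ψ · ‖f‖_Φ for all f, where ‖f‖_Φ = ∑_i ‖f φ_i‖_∞ and ‖δ_Y‖_{U−V} = sup_{x∈G} #{j : y_j ∈ x + (U−V)}. -/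
open Pointwise MeasureTheory Filter Topology ENNReal

/-- A bounded uniform partition of unity (BUPU) on `G`: a family `φ i` of continuous
functions with `supp φ_i ⊆ x_i + U` for a relatively compact zero neighborhood `U`,
uniformly bounded overlap constant `B`, summing to `1`, and `‖φ_i‖_∞ ≤ M`. -/
structure IsBUPU {G I : Type*} [AddCommGroup G] [TopologicalSpace G]
    (φ : I → G → ℝ) (x : I → G) (U : Set G) (M : NNReal) (B : ℕ) : Prop where
  mem_nhds : U ∈ nhds (0 : G)
  relCompact : IsCompact (closure U)
  continuous : ∀ i, Continuous (φ i)
  support_subset : ∀ i, tsupport (φ i) ⊆ (x i) +ᵥ U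
  overlap : ∀ i, ({j : I | (((x i) +ᵥ U) ∩ ((x j) +ᵥ U)).Nonempty} : Set I).encard ≤ B
  hasSum_one : ∀ g : G, HasSum (fun i => φ i g) 1
  norm_le : ∀ i g, ‖φ i g‖₊ ≤ M

/-- The Wiener-algebra norm `‖f‖_Φ = ∑_i ‖f · φ_i‖_∞` associated to a BUPU `Φ = (φ i)`,
valued in `ℝ≥0∞`. -/
noncomputable def WNorm {G I : Type*} (φ : I → G → ℝ) (f : G → ℂ) : ℝ≥0∞ :=
  ∑' i : I, ⨆ g : G, (‖f g * (φ i g : ℂ)‖₊ : ℝ≥0∞)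

/-- If `a` has sum `s`, then `‖s‖₊ ≤ ∑' i, ‖a i‖₊` in `ℝ≥0∞`. -/
lemma enorm_hasSum_le {ι : Type*} {a : ι → ℂ} {s : ℂ} (h : HasSum a s) :
    (‖s‖₊ : ℝ≥0∞) ≤ ∑' i, (‖a i‖₊ : ℝ≥0∞) := by
  by_cases ht : (∑' i, (‖a i‖₊ : ℝ≥0∞)) = ⊤
  · simp [ht]
  · have hsum : Summable fun i => ‖a i‖₊ := ENNReal.tsum_coe_ne_top_iff_summable.mp ht
    rw [← h.tsum_eq, ← ENNReal.coe_tsum hsum]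
    exact ENNReal.coe_le_coe.mpr (nnnorm_tsum_le hsum)

/-- Any two BUPUs `Φ` (size `U`, family `X`, norm `M_Φ`) and `Ψ` (size `V`,
family `Y`, norm `M_Ψ`) induce equivalent Wiener norms:
`‖f‖_Ψ ≤ ‖δ_Y‖_{U−V} · M_Ψ · ‖f‖_Φ`, where
`‖δ_Y‖_{U−V} = sup_{g∈G} #{j : y j ∈ g + (U−V)}`. -/
theorem stmt7 {G I J : Type*} [AddCommGroup G] [TopologicalSpace G] [IsTopologicalAddGroup G]
    [LocallyCompactSpace G] [T2Space G]
    {φ : I → G → ℝ} {x : I → G} {U : Set G} {MΦ : NNReal} {BΦ : ℕ}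
    {ψ : J → G → ℝ} {y : J → G} {V : Set G} {MΨ : NNReal} {BΨ : ℕ}
    (hΦ : IsBUPU φ x U MΦ BΦ) (hΨ : IsBUPU ψ y V MΨ BΨ)
    (f : G → ℂ) (hfc : Continuous f) (hf0 : Tendsto f (cocompact G) (nhds 0)) :
    WNorm ψ f ≤
      (⨆ g : G, (({j : J | y j ∈ g +ᵥ (U - V)} : Set J).encard : ℝ≥0∞)) * (MΨ : ℝ≥0∞) *
        WNorm φ f := by
  classical
  set C : ℝ≥0∞ := ⨆ g : G, (({j : J | y j ∈ g +ᵥ (U - V)} : Set J).encard : ℝ≥0∞) with hC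
  set T : I → ℝ≥0∞ := fun i => ⨆ g : G, (‖f g * (φ i g : ℂ)‖₊ : ℝ≥0∞) with hT
  have key : ∀ j : J, (⨆ g : G, (‖f g * (ψ j g : ℂ)‖₊ : ℝ≥0∞)) ≤
      (MΨ : ℝ≥0∞) * ∑' i, (if y j ∈ x i +ᵥ (U - V) then T i else 0) := by
    intro j
    refine iSup_le fun g => ?_
    by_cases hg : ψ j g = 0
    · simp [hg]
    have hgV : g ∈ y j +ᵥ V := hΨ.support_subset j (subset_tsupport _ hg)
    have hfg : HasSum (fun i => f g * ((φ i g : ℝ) : ℂ)) (f g) := by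
      have h1 : HasSum (fun i => ((φ i g : ℝ) : ℂ)) 1 := by
        simpa [Function.comp_def] using (hΦ.hasSum_one g).map Complex.ofRealCLM Complex.ofRealCLM.continuous
      simpa using h1.mul_left (f g)
    have hterm : ∀ i, (‖f g * ((φ i g : ℝ) : ℂ)‖₊ : ℝ≥0∞)
        ≤ (if y j ∈ x i +ᵥ (U - V) then T i else 0) := by
      intro i
      by_cases hφ : φ i g = 0
      · simp [hφ]
      · have hgU : g ∈ x i +ᵥ U := hΦ.support_subset i (subset_tsupport _ hφ)
        have hmem : y j ∈ x i +ᵥ (U - V) := by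
          obtain ⟨u, hu, hgu⟩ := hgU
          obtain ⟨v, hv, hgv⟩ := hgV
          refine ⟨u - v, Set.sub_mem_sub hu hv, ?_⟩
          simp only [vadd_eq_add] at hgu hgv ⊢
          rw [← hgv] at hgu
          have h2 : x i + (u - v) = (x i + u) - v := by abel
          rw [h2, hgu]; abel
        rw [if_pos hmem]
        exact le_iSup (fun g => (‖f g * ((φ i g : ℝ) : ℂ)‖₊ : ℝ≥0∞)) g
    calc (‖f g * ((ψ j g : ℝ) : ℂ)‖₊ : ℝ≥0∞)
        ≤ (MΨ : ℝ≥0∞) * (‖f g‖₊ : ℝ≥0∞) := by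
          rw [nnnorm_mul, ENNReal.coe_mul, mul_comm]
          refine mul_le_mul_left (ENNReal.coe_le_coe.mpr ?_) _
          simpa using hΨ.norm_le j g
      _ ≤ (MΨ : ℝ≥0∞) * ∑' i, (‖f g * ((φ i g : ℝ) : ℂ)‖₊ : ℝ≥0∞) :=
          mul_le_mul_right (enorm_hasSum_le hfg) _
      _ ≤ (MΨ : ℝ≥0∞) * ∑' i, (if y j ∈ x i +ᵥ (U - V) then T i else 0) :=
          mul_le_mul_right (ENNReal.tsum_le_tsum hterm) _
  have step1 : WNorm ψ f ≤
      (MΨ : ℝ≥0∞) * ∑' j, ∑' i, (if y j ∈ x i +ᵥ (U - V) then T i else 0) := by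
    rw [← ENNReal.tsum_mul_left]
    exact ENNReal.tsum_le_tsum key
  have swap : (∑' j, ∑' i, (if y j ∈ x i +ᵥ (U - V) then T i else 0))
      = ∑' i : I, ∑' j : J, (if y j ∈ x i +ᵥ (U - V) then T i else 0) := ENNReal.tsum_comm
  have inner : ∀ i : I, (∑' j : J, (if y j ∈ x i +ᵥ (U - V) then T i else 0)) ≤ C * T i := by
    intro i
    have heq : (∑' j : J, (if y j ∈ x i +ᵥ (U - V) then T i else 0))
        = ({j : J | y j ∈ x i +ᵥ (U - V)} : Set J).encard * T i := by
      calc (∑' j : J, (if y j ∈ x i +ᵥ (U - V) then T i else 0))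
          = ∑' j : J, ({j : J | y j ∈ x i +ᵥ (U - V)} : Set J).indicator (fun _ => T i) j := by
            congr 1
        _ = ∑' j : ({j : J | y j ∈ x i +ᵥ (U - V)} : Set J), T i :=
            (tsum_subtype _ (fun _ => T i)).symm
        _ = ({j : J | y j ∈ x i +ᵥ (U - V)} : Set J).encard * T i :=
            ENNReal.tsum_set_const _ _
    rw [heq]
    exact mul_le_mul_left
      (le_iSup (fun g : G => (({j : J | y j ∈ g +ᵥ (U - V)} : Set J).encard : ℝ≥0∞)) (x i)) _
  calc WNorm ψ f ≤ (MΨ : ℝ≥0∞) * ∑' j, ∑' i, (if y j ∈ x i +ᵥ (U - V) then T i else 0) := step1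
    _ = (MΨ : ℝ≥0∞) * ∑' i, ∑' j, (if y j ∈ x i +ᵥ (U - V) then T i else 0) := by rw [swap]
    _ ≤ (MΨ : ℝ≥0∞) * ∑' i, C * T i := mul_le_mul_right (ENNReal.tsum_le_tsum inner) _
    _ = C * (MΨ : ℝ≥0∞) * WNorm φ f := by
        rw [ENNReal.tsum_mul_left, WNorm, ← hT]
        ring
end

section
/- Let μ be a translation bounded measure on an LCA group G and f ∈ W(G). Then f is |μ|-integrable and ∫|f| d|μ| ≤ ‖μ‖_U · ‖f‖_Φ, where Φ is a BUPU of size U and ‖μ‖_U = sup_{x∈G} |μ|(x+U). In particular, μ extends to a bounded linear functional on (W(G), ‖·‖_Φ). -/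
open Pointwise MeasureTheory Filter Topology ENNReal

/-- Let `μ` be a translation bounded measure on an LCA group `G` (here `ν`
plays the role of the total variation `|μ|`) and `f ∈ W(G)`.  Then `f` is `|μ|`-integrable
with `∫ |f| d|μ| ≤ ‖μ‖_U · ‖f‖_Φ`, where `Φ` is a BUPU of size `U` and
`‖μ‖_U = sup_{g∈G} |μ|(g+U)`.  In particular `μ` is a bounded linear functional on
`(W(G), ‖·‖_Φ)`. -/
theorem stmt9 {G I : Type*} [AddCommGroup G] [TopologicalSpace G] [IsTopologicalAddGroup G]
    [LocallyCompactSpace G] [T2Space G] [MeasurableSpace G] [BorelSpace G]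
    (ν : Measure G)
    (hν : ∀ K : Set G, IsCompact K → (⨆ g : G, ν (g +ᵥ K)) < ⊤)
    {φ : I → G → ℝ} {x : I → G} {U : Set G} {M : NNReal} {B : ℕ}
    (hΦ : IsBUPU φ x U M B)
    (f : G → ℂ) (hfc : Continuous f) (hf0 : Tendsto f (cocompact G) (nhds 0))
    (hfW : WNorm φ f < ⊤) :
    Integrable f ν ∧
      (∫⁻ g, (‖f g‖₊ : ℝ≥0∞) ∂ν) ≤ (⨆ g : G, ν (g +ᵥ U)) * WNorm φ f := by
  classical
  set S : ℝ≥0∞ := ⨆ g : G, ν (g +ᵥ U) with hSdef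
  set C : I → ℝ≥0∞ := fun i => ⨆ g : G, (‖f g * (φ i g : ℂ)‖₊ : ℝ≥0∞) with hCdef
  have hWC : WNorm φ f = ∑' i, C i := rfl
  -- S is finite
  have hSlt : S < ⊤ := by
    refine lt_of_le_of_lt ?_ (hν (closure U) hΦ.relCompact)
    exact iSup_mono fun g => measure_mono (Set.vadd_set_mono subset_closure)
  -- pointwise bound
  have hpt : ∀ g, (‖f g‖₊ : ℝ≥0∞) ≤ ∑' i, (‖f g * (φ i g : ℂ)‖₊ : ℝ≥0∞) := by
    intro g
    have hs : HasSum (fun i => f g * ((φ i g : ℝ) : ℂ)) (f g) := by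
      simpa using (Complex.hasSum_ofReal.mpr (hΦ.hasSum_one g)).mul_left (f g)
    by_cases htop : ∑' i, (‖f g * (φ i g : ℂ)‖₊ : ℝ≥0∞) = ⊤
    · exact htop ▸ le_top
    · have hsum : Summable fun i => ‖f g * (φ i g : ℂ)‖₊ :=
        ENNReal.tsum_coe_ne_top_iff_summable.1 htop
      have hfsum : Summable fun i => f g * ((φ i g : ℝ) : ℂ) := hs.summable
      have h1 : ‖f g‖₊ ≤ ∑' i, ‖f g * (φ i g : ℂ)‖₊ := by
        have := nnnorm_tsum_le hsum
        rwa [hs.tsum_eq] at this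
      rw [← ENNReal.coe_tsum hsum]
      exact_mod_cast h1
  -- countable support
  have hcs : (Function.support C).Countable :=
    Summable.countable_support_ennreal (by rw [← hWC]; exact hfW.ne)
  haveI : Countable (Function.support C) := hcs.to_subtype
  set s : Set I := Function.support C with hsdef
  -- for each g, the full sum equals the sum over s
  have hsub : ∀ g : G, ∑' i : I, (‖f g * (φ i g : ℂ)‖₊ : ℝ≥0∞)
      = ∑' i : s, (‖f g * (φ (i : I) g : ℂ)‖₊ : ℝ≥0∞) := by
    intro g
    refine (tsum_subtype_eq_of_support_subset ?_).symm
    intro i hi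
    simp only [Function.mem_support] at hi ⊢
    intro hC0
    apply hi
    have : (‖f g * (φ i g : ℂ)‖₊ : ℝ≥0∞) ≤ C i := le_iSup (fun g => (‖f g * (φ i g : ℂ)‖₊ : ℝ≥0∞)) g
    simpa [hC0] using this
  -- bound for each single term
  have hterm : ∀ i : I, (∫⁻ g, (‖f g * (φ i g : ℂ)‖₊ : ℝ≥0∞) ∂ν) ≤ C i * S := by
    intro i
    have hind : ∀ g, (‖f g * (φ i g : ℂ)‖₊ : ℝ≥0∞)
        ≤ (tsupport (φ i)).indicator (fun _ => C i) g := by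
      intro g
      by_cases hg : g ∈ tsupport (φ i)
      · rw [Set.indicator_of_mem hg]
        exact le_iSup (fun g => (‖f g * (φ i g : ℂ)‖₊ : ℝ≥0∞)) g
      · rw [Set.indicator_of_notMem hg]
        simp [image_eq_zero_of_notMem_tsupport hg]
    calc (∫⁻ g, (‖f g * (φ i g : ℂ)‖₊ : ℝ≥0∞) ∂ν)
        ≤ ∫⁻ g, (tsupport (φ i)).indicator (fun _ => C i) g ∂ν := lintegral_mono hind
      _ = C i * ν (tsupport (φ i)) :=
          lintegral_indicator_const (isClosed_tsupport (φ i)).measurableSet _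
      _ ≤ C i * S := by
          refine mul_le_mul_right ?_ _
          exact le_trans (measure_mono (hΦ.support_subset i))
            (le_iSup (fun g => ν (g +ᵥ U)) (x i))
  -- main estimate
  have key : (∫⁻ g, (‖f g‖₊ : ℝ≥0∞) ∂ν) ≤ S * WNorm φ f := by
    have hmeas : ∀ i : s, AEMeasurable (fun g => (‖f g * (φ (i : I) g : ℂ)‖₊ : ℝ≥0∞)) ν := by
      intro i
      exact ((hfc.mul (Complex.continuous_ofReal.comp
        (hΦ.continuous i))).measurable.enorm).aemeasurable
    calc (∫⁻ g, (‖f g‖₊ : ℝ≥0∞) ∂ν)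
        ≤ ∫⁻ g, ∑' i : s, (‖f g * (φ (i : I) g : ℂ)‖₊ : ℝ≥0∞) ∂ν := by
          refine lintegral_mono fun g => ?_
          rw [← hsub g]; exact hpt g
      _ = ∑' i : s, ∫⁻ g, (‖f g * (φ (i : I) g : ℂ)‖₊ : ℝ≥0∞) ∂ν := lintegral_tsum hmeas
      _ ≤ ∑' i : s, C (i : I) * S := ENNReal.tsum_le_tsum fun i => hterm i
      _ = (∑' i : s, C (i : I)) * S := by rw [ENNReal.tsum_mul_right]
      _ = (∑' i : I, C i) * S := by
          rw [tsum_subtype_eq_of_support_subset (le_refl s)]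
      _ = S * WNorm φ f := by rw [hWC, mul_comm]
  refine ⟨⟨hfc.aestronglyMeasurable, ?_⟩, key⟩
  exact key.trans_lt (ENNReal.mul_lt_top hSlt hfW)
end

section
/- For the Wiener algebra norm ‖f‖_Φ = ∑_i ‖f φ_i‖_∞ associated to a BUPU Φ of size U and norm M with point family X, the norm ‖f‖_W := sup_{x∈G} ‖T_x f‖_Φ is finite for every f ∈ W(G), satisfies ‖f‖_Φ ≤ ‖f‖_W ≤ ‖δ_X‖_{U−U}·M·‖f‖_Φ, and is translation invariant. -/
open Pointwise MeasureTheory Filter Topology ENNReal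

lemma ennnorm_tsum_le' {ι : Type*} {f : ι → ℂ} {s : ℂ} (h : HasSum f s) :
    (‖s‖₊ : ℝ≥0∞) ≤ ∑' i, (‖f i‖₊ : ℝ≥0∞) := by
  by_cases ht : ∑' i, (‖f i‖₊ : ℝ≥0∞) = ⊤
  · simp [ht]
  · have hsum : Summable fun i => ‖f i‖₊ := ENNReal.tsum_coe_ne_top_iff_summable.mp ht
    rw [← h.tsum_eq, ← ENNReal.coe_tsum hsum]
    exact_mod_cast nnnorm_tsum_le hsum

lemma tsum_indicator_const {I : Type*} (s : Set I) (C : ℝ≥0∞) :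
    ∑' i : I, s.indicator (fun _ => C) i = s.encard * C := by
  rw [← tsum_subtype]
  exact ENNReal.tsum_set_const _ _

/-- Key per-translate estimate. -/
lemma wnorm_translate_le {G I : Type*} [AddCommGroup G] [TopologicalSpace G]
    {φ : I → G → ℝ} {x : I → G} {U : Set G} {M : NNReal} {B : ℕ}
    (hΦ : IsBUPU φ x U M B) (f : G → ℂ) (a : G) :
    WNorm φ (fun t => f (t - a)) ≤
      (⨆ g : G, (({i : I | x i ∈ g +ᵥ (U - U)} : Set I).encard : ℝ≥0∞)) * (M : ℝ≥0∞) *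
        WNorm φ f := by
  set D : ℝ≥0∞ := ⨆ g : G, (({i : I | x i ∈ g +ᵥ (U - U)} : Set I).encard : ℝ≥0∞) with hD
  set N : I → ℝ≥0∞ := fun j => ⨆ h : G, (‖f h * (φ j h : ℂ)‖₊ : ℝ≥0∞) with hN
  set c : I → I → ℝ≥0∞ := fun i j =>
    ({i : I | x i ∈ (x j + a) +ᵥ (U - U)} : Set I).indicator (fun _ => (M : ℝ≥0∞) * N j) i
    with hc
  have key : ∀ i g, (‖f (g - a) * (φ i g : ℂ)‖₊ : ℝ≥0∞) ≤ ∑' j, c i j := by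
    intro i g
    have hs : HasSum (fun j => f (g - a) * (φ i g : ℂ) * (φ j (g - a) : ℂ))
        (f (g - a) * (φ i g : ℂ)) := by
      have h1 := Complex.hasSum_ofReal.mpr (hΦ.hasSum_one (g - a))
      rw [Complex.ofReal_one] at h1
      simpa using h1.mul_left (f (g - a) * (φ i g : ℂ))
    refine le_trans (ennnorm_tsum_le' hs) (ENNReal.tsum_le_tsum fun j => ?_)
    by_cases hmem : x i ∈ (x j + a) +ᵥ (U - U)
    · have hcj : c i j = (M : ℝ≥0∞) * N j := Set.indicator_of_mem (show i ∈ {i : I | x i ∈ (x j + a) +ᵥ (U - U)} from hmem) _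
      rw [hcj]
      calc (‖f (g - a) * (φ i g : ℂ) * (φ j (g - a) : ℂ)‖₊ : ℝ≥0∞)
          = (‖(φ i g : ℂ)‖₊ : ℝ≥0∞) * (‖f (g - a) * (φ j (g - a) : ℂ)‖₊ : ℝ≥0∞) := by
            rw [mul_comm (f (g - a)) ((φ i g : ℝ) : ℂ), mul_assoc, nnnorm_mul]
            push_cast
            ring
        _ ≤ (M : ℝ≥0∞) * N j := by
            refine mul_le_mul' ?_ (le_iSup (fun h => (‖f h * (φ j h : ℂ)‖₊ : ℝ≥0∞)) (g - a))
            exact_mod_cast (by simpa using hΦ.norm_le i g : ‖(φ i g : ℂ)‖₊ ≤ M)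
    · have hz : (φ i g : ℂ) = 0 ∨ (φ j (g - a) : ℂ) = 0 := by
        by_contra hcon
        push_neg at hcon
        apply hmem
        have hgi' : g ∈ Function.support (φ i) := by
          simp only [Function.mem_support]
          intro h0
          exact hcon.1 (by rw [h0]; simp)
        have hgj' : g - a ∈ Function.support (φ j) := by
          simp only [Function.mem_support]
          intro h0
          exact hcon.2 (by rw [h0]; simp)
        have hgi : g ∈ x i +ᵥ U := hΦ.support_subset i (subset_tsupport _ hgi')
        have hgj : g - a ∈ x j +ᵥ U := hΦ.support_subset j (subset_tsupport _ hgj')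
        obtain ⟨u1, hu1, e1⟩ := hgi
        obtain ⟨u2, hu2, e2⟩ := hgj
        refine ⟨u2 - u1, Set.sub_mem_sub hu2 hu1, ?_⟩
        simp only [vadd_eq_add] at e1 e2 ⊢
        have e1' : x i = g - u1 := by rw [← e1]; abel
        have e2' : x j = g - a - u2 := by rw [← e2]; abel
        rw [e1', e2']
        abel
      have hz0 : f (g - a) * (φ i g : ℂ) * (φ j (g - a) : ℂ) = 0 := by
        rcases hz with h | h <;> rw [h] <;> ring
      have hcj : c i j = 0 := Set.indicator_of_notMem (show i ∉ {i : I | x i ∈ (x j + a) +ᵥ (U - U)} from hmem) _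
      rw [hcj, hz0]
      simp
  calc WNorm φ (fun t => f (t - a)) ≤ ∑' i, ∑' j, c i j :=
        ENNReal.tsum_le_tsum fun i => iSup_le fun g => key i g
    _ = ∑' j, ∑' i, c i j := ENNReal.tsum_comm
    _ ≤ ∑' j, D * (M : ℝ≥0∞) * N j := by
        refine ENNReal.tsum_le_tsum fun j => ?_
        rw [show (fun i => c i j) = fun i =>
          ({i : I | x i ∈ (x j + a) +ᵥ (U - U)} : Set I).indicator
            (fun _ => (M : ℝ≥0∞) * N j) i from rfl, tsum_indicator_const]
        have hDle : (({i : I | x i ∈ (x j + a) +ᵥ (U - U)} : Set I).encard : ℝ≥0∞) ≤ D :=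
          le_iSup (fun g => (({i : I | x i ∈ g +ᵥ (U - U)} : Set I).encard : ℝ≥0∞)) (x j + a)
        calc (({i : I | x i ∈ (x j + a) +ᵥ (U - U)} : Set I).encard : ℝ≥0∞) * ((M : ℝ≥0∞) * N j)
            ≤ D * ((M : ℝ≥0∞) * N j) := mul_le_mul_left hDle _
          _ = D * (M : ℝ≥0∞) * N j := by ring
    _ = D * (M : ℝ≥0∞) * WNorm φ f := ENNReal.tsum_mul_left

lemma encard_centers_le {G I : Type*} [AddCommGroup G] [TopologicalSpace G]
    {φ : I → G → ℝ} {x : I → G} {U : Set G} {M : NNReal} {B : ℕ}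
    (hΦ : IsBUPU φ x U M B) (z : G) :
    ({i : I | x i ∈ z +ᵥ U} : Set I).encard ≤ B := by
  rcases Set.eq_empty_or_nonempty ({i : I | x i ∈ z +ᵥ U} : Set I) with he | ⟨i0, hi0⟩
  · simp [he]
  · refine le_trans (Set.encard_mono ?_) (hΦ.overlap i0)
    intro j hj
    obtain ⟨u0, hu0, h0⟩ := hi0
    obtain ⟨uj, huj, hjz⟩ := hj
    simp only [vadd_eq_add] at h0 hjz
    exact ⟨x i0 + uj, ⟨uj, huj, rfl⟩, ⟨u0, hu0, by simp only [vadd_eq_add]; rw [← h0, ← hjz]; abel⟩⟩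

lemma biUnion_encard_le {I α : Type*} (t : Finset α) (S : α → Set I) {B : ℕ}
    (hS : ∀ p, (S p).encard ≤ B) : (⋃ p ∈ t, S p).encard ≤ (t.card : ℕ∞) * B := by
  classical
  induction t using Finset.induction_on with
  | empty => simp
  | insert p s hp ih =>
    have heq : (⋃ q ∈ insert p s, S q) = S p ∪ ⋃ q ∈ s, S q := by
      simp [Set.biUnion_insert]
    rw [heq, Finset.card_insert_of_notMem hp]
    refine le_trans (Set.encard_union_le _ _) ?_
    calc (S p).encard + (⋃ q ∈ s, S q).encard ≤ (B : ℕ∞) + (s.card : ℕ∞) * B :=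
          add_le_add (hS p) ih
      _ = ((s.card + 1 : ℕ) : ℕ∞) * B := by push_cast; ring

lemma D_lt_top {G I : Type*} [AddCommGroup G] [TopologicalSpace G] [IsTopologicalAddGroup G]
    {φ : I → G → ℝ} {x : I → G} {U : Set G} {M : NNReal} {B : ℕ}
    (hΦ : IsBUPU φ x U M B) :
    (⨆ g : G, (({i : I | x i ∈ g +ᵥ (U - U)} : Set I).encard : ℝ≥0∞)) < ⊤ := by
  set K : Set G := (fun p : G × G => p.1 - p.2) '' (closure U ×ˢ closure U) with hK
  have hKc : IsCompact K :=
    (hΦ.relCompact.prod hΦ.relCompact).image (continuous_fst.sub continuous_snd)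
  have hUK : U - U ⊆ K := by
    rintro _ ⟨u, hu, v, hv, rfl⟩
    exact ⟨(u, v), ⟨subset_closure hu, subset_closure hv⟩, rfl⟩
  obtain ⟨t, -, ht⟩ := hKc.elim_nhds_subcover (fun p => p +ᵥ U)
    (fun p _ => by simpa using vadd_mem_nhds_vadd p hΦ.mem_nhds)
  have bound : ∀ g : G, ({i : I | x i ∈ g +ᵥ (U - U)} : Set I).encard ≤ (t.card : ℕ∞) * B := by
    intro g
    have hsub : ({i : I | x i ∈ g +ᵥ (U - U)} : Set I) ⊆
        ⋃ p ∈ t, {i : I | x i ∈ (g + p) +ᵥ U} := by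
      intro i hi
      obtain ⟨w, hw, ew⟩ := hi
      obtain ⟨p, hp, hpw⟩ := Set.mem_iUnion₂.mp (ht (hUK hw))
      obtain ⟨u, hu, eu⟩ := hpw
      refine Set.mem_iUnion₂.mpr ⟨p, hp, ?_⟩
      refine ⟨u, hu, ?_⟩
      simp only [vadd_eq_add] at ew eu ⊢
      rw [← ew, ← eu]; abel
    exact le_trans (Set.encard_mono hsub)
      (biUnion_encard_le t _ (fun p => encard_centers_le hΦ (g + p)))
  refine lt_of_le_of_lt (iSup_le fun g => ENat.toENNReal_le.mpr (bound g)) ?_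
  simp only [ENat.toENNReal_mul, ENat.toENNReal_coe]
  exact ENNReal.mul_lt_top (ENNReal.natCast_lt_top _) (ENNReal.natCast_lt_top _)

/-- For the Wiener norm `‖·‖_Φ` of a BUPU `Φ` of size `U`, norm `M` and point
family `X`, the norm `‖f‖_W = sup_{a∈G} ‖T_a f‖_Φ` is finite for every `f ∈ W(G)`, satisfies
`‖f‖_Φ ≤ ‖f‖_W ≤ ‖δ_X‖_{U−U} · M · ‖f‖_Φ`, and is translation invariant. -/
theorem stmt12 {G I : Type*} [AddCommGroup G] [TopologicalSpace G] [IsTopologicalAddGroup G]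
    [LocallyCompactSpace G] [T2Space G]
    {φ : I → G → ℝ} {x : I → G} {U : Set G} {M : NNReal} {B : ℕ}
    (hΦ : IsBUPU φ x U M B)
    (f : G → ℂ) (hfc : Continuous f) (hf0 : Tendsto f (cocompact G) (nhds 0))
    (hfW : WNorm φ f < ⊤) :
    WNorm φ f ≤ (⨆ a : G, WNorm φ (fun t => f (t - a))) ∧
    (⨆ a : G, WNorm φ (fun t => f (t - a))) ≤
      (⨆ g : G, (({i : I | x i ∈ g +ᵥ (U - U)} : Set I).encard : ℝ≥0∞)) * (M : ℝ≥0∞) *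
        WNorm φ f ∧
    (⨆ a : G, WNorm φ (fun t => f (t - a))) < ⊤ ∧
    (∀ b : G, (⨆ a : G, WNorm φ (fun t => f (t - b - a))) =
      ⨆ a : G, WNorm φ (fun t => f (t - a))) := by
  refine ⟨?_, ?_, ?_, ?_⟩
  · have h0 : WNorm φ (fun t => f (t - 0)) = WNorm φ f := by simp only [sub_zero]
    calc WNorm φ f = WNorm φ (fun t => f (t - 0)) := h0.symm
      _ ≤ ⨆ a : G, WNorm φ (fun t => f (t - a)) :=
        le_iSup (fun a => WNorm φ fun t => f (t - a)) 0
  · exact iSup_le fun a => wnorm_translate_le hΦ f a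
  · exact lt_of_le_of_lt (iSup_le fun a => wnorm_translate_le hΦ f a)
      (ENNReal.mul_lt_top (ENNReal.mul_lt_top (D_lt_top hΦ) ENNReal.coe_lt_top) hfW)
  · intro b
    have hrw : ∀ a : G, (fun t => f (t - b - a)) = fun t => f (t - (b + a)) := by
      intro a; funext u; rw [sub_sub]
    apply le_antisymm
    · refine iSup_le fun a => ?_
      rw [hrw a]
      exact le_iSup (fun a => WNorm φ fun t => f (t - a)) (b + a)
    · refine iSup_le fun a => ?_
      refine le_iSup_of_le (a - b) ?_
      rw [hrw (a - b)]
      have hab : b + (a - b) = a := by abel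
      rw [hab]
end

section
/- Let G, H be LCA groups and L a lattice (discrete cocompact subgroup) in G × H. Then the weighted model set comb ω_h = ∑_{(x,y)∈L} h(y) δ_x is a translation bounded measure on G for every h in the Wiener algebra W(H), with operator norm bound |ω_h(g)| ≤ C · ‖g‖_{W(G)} · ‖h‖_{W(H)} for all g ∈ W(G), where C depends only on L. -/
open Pointwise MeasureTheory Filter Topology ENNReal

/-- If `f` has sum `a`, then `‖a‖₊ ≤ ∑' ‖f i‖₊` in `ℝ≥0∞`. -/
lemma hasSum_coe_nnnorm_le {ι E : Type*} [NormedAddCommGroup E] {f : ι → E} {a : E}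
    (h : HasSum f a) : (‖a‖₊ : ℝ≥0∞) ≤ ∑' i, (‖f i‖₊ : ℝ≥0∞) := by
  by_cases htop : ∑' i, (‖f i‖₊ : ℝ≥0∞) = ⊤
  · exact htop ▸ le_top
  · have hs : Summable fun i => ‖f i‖₊ := ENNReal.tsum_coe_ne_top_iff_summable.mp htop
    have hs' : Summable fun i => ‖f i‖ := by
      simpa only [coe_nnnorm] using NNReal.summable_coe.mpr hs
    have hle : ‖a‖ ≤ ∑' i, ‖f i‖ := by
      rw [← h.tsum_eq]; exact norm_tsum_le_tsum_norm hs'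
    rw [← ENNReal.coe_tsum hs, ENNReal.coe_le_coe, ← NNReal.coe_le_coe, NNReal.coe_tsum]
    simpa only [coe_nnnorm] using hle

/-- Membership in a translate of a product set, componentwise. -/
lemma mem_vadd_prod {G H : Type*} [AddCommGroup G] [AddCommGroup H]
    (a : G) (b : H) (A : Set G) (B : Set H) (z : G × H) :
    z ∈ (a, b) +ᵥ A ×ˢ B ↔ z.1 ∈ a +ᵥ A ∧ z.2 ∈ b +ᵥ B := by
  simp [Set.mem_vadd_set_iff_neg_vadd_mem, vadd_eq_add, Set.mem_prod,
    Prod.fst_add, Prod.snd_add]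

/-- Pointwise BUPU splitting bound. -/
lemma bupu_pointwise_le {G I : Type*} {φ : I → G → ℝ} {z : G}
    (h1 : HasSum (fun i => φ i z) 1) (f : G → ℂ) :
    (‖f z‖₊ : ℝ≥0∞) ≤ ∑' i, (‖f z * (φ i z : ℂ)‖₊ : ℝ≥0∞) := by
  have h2 : HasSum (fun i => ((φ i z : ℝ) : ℂ)) 1 := by
    have h2' := Complex.hasSum_ofReal.mpr h1
    rwa [Complex.ofReal_one] at h2'
  have h3 : HasSum (fun i => f z * (φ i z : ℂ)) (f z) := by
    simpa using h2.mul_left (f z)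
  exact hasSum_coe_nnnorm_le h3

/-- Let `G, H` be LCA groups and `L` a lattice (discrete cocompact subgroup)
in `G × H`.  Then the weighted model set comb `ω_h = ∑_{(x,y)∈L} h(y) δ_x` is a translation
bounded measure on `G` for every `h ∈ W(H)`, with the operator norm bound
`|ω_h(g)| ≤ C · ‖g‖_{W(G)} · ‖h‖_{W(H)}` for all `g ∈ W(G)`, where `C` depends only on
`L` (and the chosen BUPUs). -/
theorem stmt18 {G H I J : Type*}
    [AddCommGroup G] [TopologicalSpace G] [IsTopologicalAddGroup G] [LocallyCompactSpace G] [T2Space G]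
    [AddCommGroup H] [TopologicalSpace H] [IsTopologicalAddGroup H] [LocallyCompactSpace H] [T2Space H]
    (L : AddSubgroup (G × H)) (hLdisc : DiscreteTopology L)
    (hLcocpt : ∃ K : Set (G × H), IsCompact K ∧ K + (L : Set (G × H)) = Set.univ)
    {φ : I → G → ℝ} {x : I → G} {U : Set G} {M : NNReal} {BΦ : ℕ}
    {ψ : J → H → ℝ} {y : J → H} {V : Set H} {N : NNReal} {BΨ : ℕ}
    (hΦ : IsBUPU φ x U M BΦ) (hΨ : IsBUPU ψ y V N BΨ) :
    ∃ C : ℝ≥0∞, C < ⊤ ∧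
      ∀ (h : H → ℂ), Continuous h → Tendsto h (cocompact H) (nhds 0) → WNorm ψ h < ⊤ →
        (∀ (g : G → ℂ), Continuous g → Tendsto g (cocompact G) (nhds 0) →
          ∑' l : L, (‖h ((l : G × H)).2 * g ((l : G × H)).1‖₊ : ℝ≥0∞)
            ≤ C * WNorm φ g * WNorm ψ h) ∧
        (∀ K : Set G, IsCompact K →
          (⨆ a : G, ∑' l : L,
            (a +ᵥ K).indicator (fun _ : G => (‖h ((l : G × H)).2‖₊ : ℝ≥0∞))
              ((l : G × H)).1) < ⊤) := by
  classical
  -- separation neighborhood of the discrete subgroup L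
  obtain ⟨W, hWo, hWpre⟩ : ∃ W : Set (G × H), IsOpen W ∧ (Subtype.val ⁻¹' W : Set L) = {0} :=
    isOpen_induced_iff.mp (isOpen_discrete ({0} : Set L))
  have hW0 : (0 : G × H) ∈ W := by
    have h0 : (0 : L) ∈ (Subtype.val ⁻¹' W : Set L) := by rw [hWpre]; rfl
    exact h0
  have hsep : ∀ z ∈ L, z ∈ W → z = 0 := by
    intro z hz hzW
    have hmem : (⟨z, hz⟩ : L) ∈ (Subtype.val ⁻¹' W : Set L) := hzW
    rw [hWpre] at hmem
    simpa [Subtype.ext_iff] using hmem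
  obtain ⟨V₁, hV₁, hV₁sub⟩ := exists_nhds_half_neg (hWo.mem_nhds hW0)
  set W₁ : Set (G × H) := interior V₁ with hW₁def
  have hW₁o : IsOpen W₁ := isOpen_interior
  have hW₁0 : (0 : G × H) ∈ W₁ := mem_interior_iff_mem_nhds.mpr hV₁
  -- uniform counting lemma for translates of compact sets
  have count : ∀ K : Set (G × H), IsCompact K → ∃ n : ℕ, ∀ a : G × H,
      ∑' l : L, (a +ᵥ K).indicator (fun _ => (1 : ℝ≥0∞)) ↑l ≤ n := by
    intro K hK
    obtain ⟨T, hT⟩ := hK.elim_finite_subcover (fun c : G × H => c +ᵥ W₁)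
      (fun c => hW₁o.vadd c)
      (fun z hz => Set.mem_iUnion.mpr
        ⟨z, Set.mem_vadd_set_iff_neg_vadd_mem.mpr (by simpa using hW₁0)⟩)
    refine ⟨T.card, fun a => ?_⟩
    set P : Set L := (Subtype.val ⁻¹' (a +ᵥ K) : Set L) with hPdef
    have hPcard : P.encard ≤ (T.card : ℕ∞) := by
      rw [← Set.InjOn.encard_image Subtype.val_injective.injOn]
      have himg : Subtype.val '' P ⊆ (a +ᵥ K) ∩ {z : G × H | z ∈ L} := by
        rintro z ⟨l, hl, rfl⟩
        exact ⟨hl, l.2⟩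
      refine le_trans (Set.encard_mono himg) ?_
      rw [← Set.encard_coe_eq_coe_finsetCard T]
      have hx : ∀ z ∈ (a +ᵥ K) ∩ {z : G × H | z ∈ L}, ∃ c ∈ T, z ∈ (a + c) +ᵥ W₁ := by
        intro z hz
        obtain ⟨k, hk, rfl⟩ := Set.mem_vadd_set.mp hz.1
        obtain ⟨c, hcT, hkc⟩ := Set.mem_iUnion₂.mp (hT hk)
        obtain ⟨w, hw, rfl⟩ := Set.mem_vadd_set.mp hkc
        exact ⟨c, hcT, Set.mem_vadd_set.mpr ⟨w, hw, by simp [vadd_eq_add, add_assoc]⟩⟩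
      set f : G × H → G × H := fun z =>
        if hz : ∃ c ∈ T, z ∈ (a + c) +ᵥ W₁ then hz.choose else 0 with hfdef
      have hmaps : Set.MapsTo f ((a +ᵥ K) ∩ {z : G × H | z ∈ L}) ↑T := by
        intro z hz
        have hzex := hx z hz
        simp only [hfdef, dif_pos hzex]
        exact Finset.mem_coe.mpr hzex.choose_spec.1
      have hinj : Set.InjOn f ((a +ᵥ K) ∩ {z : G × H | z ∈ L}) := by
        intro z hz z' hz' hfz
        have hzex := hx z hz
        have hz'ex := hx z' hz'
        simp only [hfdef, dif_pos hzex, dif_pos hz'ex] at hfz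
        have h1 : z ∈ (a + hzex.choose) +ᵥ W₁ := hzex.choose_spec.2
        have h2 : z' ∈ (a + hzex.choose) +ᵥ W₁ := by
          rw [hfz]; exact hz'ex.choose_spec.2
        have h1' : -(a + hzex.choose) + z ∈ V₁ :=
          interior_subset (by simpa [vadd_eq_add] using
            Set.mem_vadd_set_iff_neg_vadd_mem.mp h1)
        have h2' : -(a + hzex.choose) + z' ∈ V₁ :=
          interior_subset (by simpa [vadd_eq_add] using
            Set.mem_vadd_set_iff_neg_vadd_mem.mp h2)
        have hsub : z - z' ∈ W := by
          have hW := hV₁sub _ h1' _ h2'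
          have heq : (-(a + hzex.choose) + z) - (-(a + hzex.choose) + z') = z - z' := by abel
          rwa [heq] at hW
        have hzL : z - z' ∈ L := sub_mem hz.2 hz'.2
        exact sub_eq_zero.mp (hsep _ hzL hsub)
      exact Set.encard_le_encard_of_injOn hmaps hinj
    obtain ⟨hPfin, n₀, hn₀, hn₀le⟩ := Set.encard_le_coe_iff.mp hPcard
    have hsum : ∑' l : L, (a +ᵥ K).indicator (fun _ => (1 : ℝ≥0∞)) ↑l
        = ∑ l ∈ hPfin.toFinset, (a +ᵥ K).indicator (fun _ => (1 : ℝ≥0∞)) ↑l := by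
      refine tsum_eq_sum fun l hl => ?_
      have hnm : (↑l : G × H) ∉ a +ᵥ K := fun hmem => hl (hPfin.mem_toFinset.mpr hmem)
      simp [Set.indicator_of_notMem hnm]
    rw [hsum]
    have hcard : hPfin.toFinset.card = n₀ := by
      have hc := hPfin.encard_eq_coe_toFinset_card
      rw [hn₀] at hc
      exact_mod_cast hc.symm
    calc ∑ l ∈ hPfin.toFinset, (a +ᵥ K).indicator (fun _ => (1 : ℝ≥0∞)) ↑l
        ≤ hPfin.toFinset.card • (1 : ℝ≥0∞) :=
          Finset.sum_le_card_nsmul _ _ _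
            (fun l _ => by by_cases hm : (↑l : G × H) ∈ a +ᵥ K <;> simp [hm])
      _ ≤ (T.card : ℝ≥0∞) := by
          rw [nsmul_eq_mul, mul_one, hcard]
          exact_mod_cast hn₀le
  -- the main constant
  obtain ⟨n₀, hn₀⟩ := count ((closure U) ×ˢ (closure V)) (hΦ.relCompact.prod hΨ.relCompact)
  refine ⟨(n₀ : ℝ≥0∞), ENNReal.natCast_lt_top n₀, fun h hhc hh0 hWψ => ?_⟩
  set Sψ : J → ℝ≥0∞ := fun j => ⨆ z : H, (‖h z * (ψ j z : ℂ)‖₊ : ℝ≥0∞) with hSψdef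
  have hWψeq : WNorm ψ h = ∑' j, Sψ j := rfl
  constructor
  · -- part A
    intro g hgc hg0
    set Sφ : I → ℝ≥0∞ := fun i => ⨆ z : G, (‖g z * (φ i z : ℂ)‖₊ : ℝ≥0∞) with hSφdef
    have hWφeq : WNorm φ g = ∑' i, Sφ i := rfl
    have hterm : ∀ (l : L) (j : J) (i : I),
        (‖h ((l : G × H)).2 * (ψ j ((l : G × H)).2 : ℂ)‖₊ : ℝ≥0∞)
          * (‖g ((l : G × H)).1 * (φ i ((l : G × H)).1 : ℂ)‖₊ : ℝ≥0∞)
        ≤ Sψ j * Sφ i *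
          (((x i, y j)) +ᵥ ((closure U) ×ˢ (closure V))).indicator (fun _ => 1) ↑l := by
      intro l j i
      by_cases hm : (↑l : G × H) ∈ ((x i, y j)) +ᵥ ((closure U) ×ˢ (closure V))
      · rw [Set.indicator_of_mem hm, mul_one]
        exact mul_le_mul' (le_iSup (fun z => (‖h z * (ψ j z : ℂ)‖₊ : ℝ≥0∞)) _)
          (le_iSup (fun z => (‖g z * (φ i z : ℂ)‖₊ : ℝ≥0∞)) _)
      · rw [mem_vadd_prod] at hm
        rcases not_and_or.mp hm with hm1 | hm2
        · have hφ0 : φ i ((l : G × H)).1 = 0 := by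
            apply image_eq_zero_of_notMem_tsupport
            intro hmem
            exact hm1 (Set.vadd_set_mono subset_closure (hΦ.support_subset i hmem))
          simp [hφ0]
        · have hψ0 : ψ j ((l : G × H)).2 = 0 := by
            apply image_eq_zero_of_notMem_tsupport
            intro hmem
            exact hm2 (Set.vadd_set_mono subset_closure (hΨ.support_subset j hmem))
          simp [hψ0]
    calc ∑' l : L, (‖h ((l : G × H)).2 * g ((l : G × H)).1‖₊ : ℝ≥0∞)
        ≤ ∑' (l : L) (j : J) (i : I),
            (‖h ((l : G × H)).2 * (ψ j ((l : G × H)).2 : ℂ)‖₊ : ℝ≥0∞)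
              * (‖g ((l : G × H)).1 * (φ i ((l : G × H)).1 : ℂ)‖₊ : ℝ≥0∞) := by
          refine ENNReal.tsum_le_tsum fun l => ?_
          have h1 := bupu_pointwise_le (hΨ.hasSum_one ((l : G × H)).2) h
          have h2 := bupu_pointwise_le (hΦ.hasSum_one ((l : G × H)).1) g
          calc (‖h ((l : G × H)).2 * g ((l : G × H)).1‖₊ : ℝ≥0∞)
              = (‖h ((l : G × H)).2‖₊ : ℝ≥0∞) * (‖g ((l : G × H)).1‖₊ : ℝ≥0∞) := by
                rw [nnnorm_mul, ENNReal.coe_mul]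
            _ ≤ (∑' j, (‖h ((l : G × H)).2 * (ψ j ((l : G × H)).2 : ℂ)‖₊ : ℝ≥0∞))
                  * ∑' i, (‖g ((l : G × H)).1 * (φ i ((l : G × H)).1 : ℂ)‖₊ : ℝ≥0∞) :=
                mul_le_mul' h1 h2
            _ = ∑' (j : J) (i : I),
                  (‖h ((l : G × H)).2 * (ψ j ((l : G × H)).2 : ℂ)‖₊ : ℝ≥0∞)
                    * (‖g ((l : G × H)).1 * (φ i ((l : G × H)).1 : ℂ)‖₊ : ℝ≥0∞) := by
                rw [← ENNReal.tsum_mul_right]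
                exact tsum_congr fun j => ENNReal.tsum_mul_left.symm
      _ ≤ ∑' (l : L) (j : J) (i : I), Sψ j * Sφ i *
            (((x i, y j)) +ᵥ ((closure U) ×ˢ (closure V))).indicator (fun _ => 1) ↑l :=
          ENNReal.tsum_le_tsum fun l => ENNReal.tsum_le_tsum fun j =>
            ENNReal.tsum_le_tsum fun i => hterm l j i
      _ = ∑' (j : J) (i : I), Sψ j * Sφ i *
            ∑' l : L, (((x i, y j)) +ᵥ ((closure U) ×ˢ (closure V))).indicator
              (fun _ => 1) ↑l := by
          rw [ENNReal.tsum_comm]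
          exact tsum_congr fun j => by
            rw [ENNReal.tsum_comm]
            exact tsum_congr fun i => ENNReal.tsum_mul_left
      _ ≤ ∑' (j : J) (i : I), Sψ j * Sφ i * (n₀ : ℝ≥0∞) :=
          ENNReal.tsum_le_tsum fun j => ENNReal.tsum_le_tsum fun i =>
            mul_le_mul_right (hn₀ _) _
      _ = (n₀ : ℝ≥0∞) * WNorm φ g * WNorm ψ h := by
          rw [hWφeq, hWψeq]
          simp only [mul_assoc, ENNReal.tsum_mul_left, ENNReal.tsum_mul_right]
          ring
  · -- part B
    intro K hK
    obtain ⟨nK, hnK⟩ := count (K ×ˢ (closure V)) (hK.prod hΨ.relCompact)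
    refine lt_of_le_of_lt (iSup_le fun a => ?_)
      (ENNReal.mul_lt_top (ENNReal.natCast_lt_top nK) hWψ)
    have hterm2 : ∀ l : L,
        (a +ᵥ K).indicator (fun _ : G => (‖h ((l : G × H)).2‖₊ : ℝ≥0∞)) ((l : G × H)).1
        ≤ ∑' j : J, Sψ j *
            (((a, y j)) +ᵥ (K ×ˢ (closure V))).indicator (fun _ => 1) ↑l := by
      intro l
      by_cases hm : ((l : G × H)).1 ∈ a +ᵥ K
      · rw [Set.indicator_of_mem hm]
        refine le_trans (bupu_pointwise_le (hΨ.hasSum_one ((l : G × H)).2) h)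
          (ENNReal.tsum_le_tsum fun j => ?_)
        by_cases hm2 : ((l : G × H)).2 ∈ y j +ᵥ closure V
        · have hmem : (↑l : G × H) ∈ ((a, y j)) +ᵥ (K ×ˢ (closure V)) :=
            (mem_vadd_prod _ _ _ _ _).mpr ⟨hm, hm2⟩
          rw [Set.indicator_of_mem hmem, mul_one]
          exact le_iSup (fun z => (‖h z * (ψ j z : ℂ)‖₊ : ℝ≥0∞)) _
        · have hψ0 : ψ j ((l : G × H)).2 = 0 := by
            apply image_eq_zero_of_notMem_tsupport
            intro hmem
            exact hm2 (Set.vadd_set_mono subset_closure (hΨ.support_subset j hmem))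
          simp [hψ0]
      · rw [Set.indicator_of_notMem hm]
        exact zero_le
    calc ∑' l : L, (a +ᵥ K).indicator
          (fun _ : G => (‖h ((l : G × H)).2‖₊ : ℝ≥0∞)) ((l : G × H)).1
        ≤ ∑' (l : L) (j : J), Sψ j *
            (((a, y j)) +ᵥ (K ×ˢ (closure V))).indicator (fun _ => 1) ↑l :=
          ENNReal.tsum_le_tsum hterm2
      _ = ∑' j : J, Sψ j *
            ∑' l : L, (((a, y j)) +ᵥ (K ×ˢ (closure V))).indicator (fun _ => 1) ↑l := by
          rw [ENNReal.tsum_comm]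
          exact tsum_congr fun j => ENNReal.tsum_mul_left
      _ ≤ ∑' j : J, Sψ j * (nK : ℝ≥0∞) :=
          ENNReal.tsum_le_tsum fun j => mul_le_mul_right (hnK _) _
      _ = (nK : ℝ≥0∞) * WNorm ψ h := by
          rw [hWψeq, ENNReal.tsum_mul_right, mul_comm]
end

section
/- Let G, H be LCA groups and L a discrete cocompact subgroup of G × H. For all g ∈ W₀(G) and h ∈ W₀(H), the Poisson summation formula ω_h(g) = dens(L) · ω_{hˇ}(gˇ) holds with absolutely convergent sums, where ω_h = ∑_{(x,y)∈L} h(y) δ_x on G and ω_{hˇ} = ∑_{(χ,η)∈L°} hˇ(η) δ_χ on Ĝ. Consequently ω_h is twice AG transformable with ω̂_h = dens(L) · ω_{hˇ}. -/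
open Pointwise MeasureTheory Filter Topology ENNReal

/-- An abstract Pontryagin duality pairing between an LCA group `G` and its dual group
`Ĝ`: a jointly continuous bi-additive pairing by unimodular complex numbers separating
points on both sides. -/
structure FourierPair' (G Gd : Type*) [AddCommGroup G] [TopologicalSpace G]
    [AddCommGroup Gd] [TopologicalSpace Gd] where
  e : G → Gd → ℂ
  continuous_e : Continuous fun p : G × Gd => e p.1 p.2
  norm_one : ∀ x χ, ‖e x χ‖ = 1
  add_left : ∀ x y χ, e (x + y) χ = e x χ * e y χ
  add_right : ∀ x χ η, e x (χ + η) = e x χ * e x η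
  sep_left : ∀ x : G, x ≠ 0 → ∃ χ, e x χ ≠ 1
  sep_right : ∀ χ : Gd, χ ≠ 0 → ∃ x, e x χ ≠ 1

/-- The Fourier transform `f̂(χ) = ∫ conj(e(x,χ)) f(x) dμ(x)` associated to a pairing. -/
noncomputable def FourierPair'.FT {G Gd : Type*} [AddCommGroup G] [TopologicalSpace G]
    [AddCommGroup Gd] [TopologicalSpace Gd] [MeasurableSpace G]
    (P : FourierPair' G Gd) (μ : MeasureTheory.Measure G) (f : G → ℂ) : Gd → ℂ :=
  fun χ => ∫ x, (starRingEnd ℂ) (P.e x χ) * f x ∂μ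

/-- The inverse Fourier transform `f̌(χ) = ∫ e(x,χ) f(x) dμ(x)` associated to a pairing. -/
noncomputable def FourierPair'.invFT {G Gd : Type*} [AddCommGroup G] [TopologicalSpace G]
    [AddCommGroup Gd] [TopologicalSpace Gd] [MeasurableSpace G]
    (P : FourierPair' G Gd) (μ : MeasureTheory.Measure G) (f : G → ℂ) : Gd → ℂ :=
  fun χ => ∫ x, P.e x χ * f x ∂μ


private lemma aux_bdd {X : Type*} [TopologicalSpace X] {f : X → ℂ}
    (hc : Continuous f) (h0 : Tendsto f (cocompact X) (nhds 0)) :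
    ∃ C : ℝ, ∀ x, ‖f x‖ ≤ C := by
  obtain ⟨K, hK, hKsub⟩ := hasBasis_cocompact.mem_iff.1
    (h0 (Metric.ball_mem_nhds (0 : ℂ) one_pos))
  have hout : ∀ x ∉ K, ‖f x‖ < 1 := by
    intro x hx
    have := hKsub hx
    simpa [Metric.mem_ball, dist_zero_right] using this
  rcases K.eq_empty_or_nonempty with rfl | hne
  · exact ⟨1, fun x => le_of_lt (hout x (by simp))⟩
  · obtain ⟨x₀, _, hx₀⟩ := hK.exists_isMaxOn hne (hc.norm.continuousOn)
    refine ⟨max ‖f x₀‖ 1, fun x => ?_⟩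
    by_cases hx : x ∈ K
    · exact le_max_of_le_left (hx₀ hx)
    · exact le_max_of_le_right (le_of_lt (hout x hx))

private lemma aux_tendsto {X Y : Type*} [TopologicalSpace X] [TopologicalSpace Y]
    {f : X → ℂ} {g : Y → ℂ}
    (hf0 : Tendsto f (cocompact X) (nhds 0)) (hg0 : Tendsto g (cocompact Y) (nhds 0))
    (hfc : Continuous f) (hgc : Continuous g) :
    Tendsto (fun p : X × Y => f p.1 * g p.2) (cocompact (X × Y)) (nhds 0) := by
  rw [← Filter.coprod_cocompact]
  rw [Filter.coprod]
  rw [tendsto_sup]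
  obtain ⟨Cg, hCg⟩ := aux_bdd hgc hg0
  obtain ⟨Cf, hCf⟩ := aux_bdd hfc hf0
  constructor
  · have h1 : Tendsto (fun p : X × Y => f p.1) (Filter.comap Prod.fst (cocompact X))
        (nhds 0) := hf0.comp tendsto_comap
    have h2 : Tendsto (fun p : X × Y => ‖f p.1‖ * Cg)
        (Filter.comap Prod.fst (cocompact X)) (nhds 0) := by
      have hn : Tendsto (fun p : X × Y => ‖f p.1‖)
          (Filter.comap Prod.fst (cocompact X)) (nhds 0) := by
        simpa using h1.norm
      simpa using hn.mul_const Cg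
    refine squeeze_zero_norm (fun p => ?_) h2
    rw [norm_mul]
    exact mul_le_mul_of_nonneg_left (hCg p.2) (norm_nonneg _)
  · have h1 : Tendsto (fun p : X × Y => g p.2) (Filter.comap Prod.snd (cocompact Y))
        (nhds 0) := hg0.comp tendsto_comap
    have h2 : Tendsto (fun p : X × Y => Cf * ‖g p.2‖)
        (Filter.comap Prod.snd (cocompact Y)) (nhds 0) := by
      have hn : Tendsto (fun p : X × Y => ‖g p.2‖)
          (Filter.comap Prod.snd (cocompact Y)) (nhds 0) := by
        simpa using h1.norm
      simpa using hn.const_mul Cf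
    refine squeeze_zero_norm (fun p => ?_) h2
    rw [norm_mul]
    exact mul_le_mul_of_nonneg_right (hCf p.1) (norm_nonneg (g p.2))

private lemma aux_wnorm {X Y I J : Type*} (φ : I → X → ℝ) (ψ : J → Y → ℝ)
    (f : X → ℂ) (g : Y → ℂ) :
    WNorm (fun p : I × J => fun q : X × Y => φ p.1 q.1 * ψ p.2 q.2)
      (fun q : X × Y => f q.1 * g q.2) = WNorm φ f * WNorm ψ g := by
  unfold WNorm
  have key : ∀ (i : I) (j : J),
      (⨆ q : X × Y, (‖f q.1 * g q.2 * ((φ i q.1 * ψ j q.2 : ℝ) : ℂ)‖₊ : ℝ≥0∞)) =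
      (⨆ x : X, (‖f x * (φ i x : ℂ)‖₊ : ℝ≥0∞)) * ⨆ y : Y, (‖g y * (ψ j y : ℂ)‖₊ : ℝ≥0∞) := by
    intro i j
    have : ∀ q : X × Y, (‖f q.1 * g q.2 * ((φ i q.1 * ψ j q.2 : ℝ) : ℂ)‖₊ : ℝ≥0∞) =
        (‖f q.1 * (φ i q.1 : ℂ)‖₊ : ℝ≥0∞) * ‖g q.2 * (ψ j q.2 : ℂ)‖₊ := by
      intro q
      rw [← ENNReal.coe_mul, ← nnnorm_mul]
      congr 1
      push_cast
      ring_nf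
    simp_rw [this]
    rw [iSup_prod]
    simp_rw [← ENNReal.mul_iSup, ← ENNReal.iSup_mul]
  simp_rw [key]
  rw [ENNReal.tsum_prod']
  simp_rw [ENNReal.tsum_mul_left]
  rw [ENNReal.tsum_mul_right]

/-- Poisson summation formula for weighted model sets: Let `G, H` be LCA
groups and `L` a discrete cocompact subgroup of `G × H` with dual lattice `L°` and density
`dens(L) = d`, for which the Poisson summation formula
`δ_L(F) = d · δ_{L°}(F̌)` holds on `W₀(G × H)` (hypothesis `hPSF`).  Then for all
`g ∈ W₀(G)` and `h ∈ W₀(H)` the formula `ω_h(g) = d · ω_{ȟ}(ǧ)` holds with absolutely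
convergent sums, where `ω_h = ∑_{(x,y)∈L} h(y) δ_x` and `ω_{ȟ} = ∑_{(χ,η)∈L°} ȟ(η) δ_χ`;
consequently `ω_h` is twice AG transformable with `ω̂_h = d · ω_{ȟ}`. -/
theorem stmt19 {G H Gd Hd I I' J J' : Type*}
    [AddCommGroup G] [TopologicalSpace G] [IsTopologicalAddGroup G] [LocallyCompactSpace G]
    [T2Space G] [MeasurableSpace G] [BorelSpace G]
    [AddCommGroup H] [TopologicalSpace H] [IsTopologicalAddGroup H] [LocallyCompactSpace H]
    [T2Space H] [MeasurableSpace H] [BorelSpace H]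
    [AddCommGroup Gd] [TopologicalSpace Gd] [IsTopologicalAddGroup Gd] [LocallyCompactSpace Gd]
    [T2Space Gd]
    [AddCommGroup Hd] [TopologicalSpace Hd] [IsTopologicalAddGroup Hd] [LocallyCompactSpace Hd]
    [T2Space Hd]
    (PG : FourierPair' G Gd) (PH : FourierPair' H Hd)
    (μG : Measure G) [μG.IsAddHaarMeasure] [SigmaFinite μG]
    (μH : Measure H) [μH.IsAddHaarMeasure] [SigmaFinite μH]
    -- BUPUs describing the Wiener algebras of `G`, `H`, `Ĝ`, `Ĥ`
    {φG : I → G → ℝ} {xG : I → G} {UG : Set G} {MG : NNReal} {BG : ℕ}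
    (hΦG : IsBUPU φG xG UG MG BG)
    {φH : J → H → ℝ} {xH : J → H} {UH : Set H} {MH : NNReal} {BH : ℕ}
    (hΦH : IsBUPU φH xH UH MH BH)
    {φGd : I' → Gd → ℝ} {xGd : I' → Gd} {UGd : Set Gd} {MGd : NNReal} {BGd : ℕ}
    (hΦGd : IsBUPU φGd xGd UGd MGd BGd)
    {φHd : J' → Hd → ℝ} {xHd : J' → Hd} {UHd : Set Hd} {MHd : NNReal} {BHd : ℕ}
    (hΦHd : IsBUPU φHd xHd UHd MHd BHd)
    -- the lattice, its dual lattice, and its density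
    (L : AddSubgroup (G × H)) (hLdisc : DiscreteTopology L)
    (hLcocpt : ∃ K : Set (G × H), IsCompact K ∧ K + (L : Set (G × H)) = Set.univ)
    (L0 : Set (Gd × Hd))
    (hL0 : L0 = {p : Gd × Hd | ∀ l ∈ L, PG.e l.1 p.1 * PH.e l.2 p.2 = 1})
    (d : ℝ) (hd : 0 < d)
    -- the Poisson summation formula for `L`, valid on `W₀(G × H)`
    (hPSF : ∀ F : G × H → ℂ, Continuous F → Tendsto F (cocompact (G × H)) (nhds 0) →
      WNorm (fun p : I × J => fun q : G × H => φG p.1 q.1 * φH p.2 q.2) F < ⊤ →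
      Continuous (fun p : Gd × Hd => ∫ z, PG.e z.1 p.1 * PH.e z.2 p.2 * F z ∂(μG.prod μH)) →
      Tendsto (fun p : Gd × Hd => ∫ z, PG.e z.1 p.1 * PH.e z.2 p.2 * F z ∂(μG.prod μH))
        (cocompact (Gd × Hd)) (nhds 0) →
      WNorm (fun p : I' × J' => fun q : Gd × Hd => φGd p.1 q.1 * φHd p.2 q.2)
        (fun p : Gd × Hd => ∫ z, PG.e z.1 p.1 * PH.e z.2 p.2 * F z ∂(μG.prod μH)) < ⊤ →
      (Summable fun l : L => ‖F (l : G × H)‖) ∧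
      (Summable fun k : L0 =>
        ‖∫ z, PG.e z.1 (k : Gd × Hd).1 * PH.e z.2 (k : Gd × Hd).2 * F z ∂(μG.prod μH)‖) ∧
      (∑' l : L, F (l : G × H)) = (d : ℂ) *
        ∑' k : L0, ∫ z, PG.e z.1 (k : Gd × Hd).1 * PH.e z.2 (k : Gd × Hd).2 * F z
          ∂(μG.prod μH)) :
    -- conclusion: the PSF for weighted model sets, with absolutely convergent sums
    ∀ g : G → ℂ, Continuous g → Tendsto g (cocompact G) (nhds 0) → WNorm φG g < ⊤ →
      Continuous (PG.invFT μG g) → Tendsto (PG.invFT μG g) (cocompact Gd) (nhds 0) →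
      WNorm φGd (PG.invFT μG g) < ⊤ →
    ∀ h : H → ℂ, Continuous h → Tendsto h (cocompact H) (nhds 0) → WNorm φH h < ⊤ →
      Continuous (PH.invFT μH h) → Tendsto (PH.invFT μH h) (cocompact Hd) (nhds 0) →
      WNorm φHd (PH.invFT μH h) < ⊤ →
      (Summable fun l : L => ‖h ((l : G × H)).2 * g ((l : G × H)).1‖) ∧
      (Summable fun k : L0 =>
        ‖PH.invFT μH h ((k : Gd × Hd)).2 * PG.invFT μG g ((k : Gd × Hd)).1‖) ∧
      (∑' l : L, h ((l : G × H)).2 * g ((l : G × H)).1) =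
        (d : ℂ) * ∑' k : L0, PH.invFT μH h ((k : Gd × Hd)).2 *
          PG.invFT μG g ((k : Gd × Hd)).1 := by
  intro g hgc hg0 hgW hgc' hg0' hgW' h hhc hh0 hhW hhc' hh0' hhW'
  set F : G × H → ℂ := fun q => g q.1 * h q.2 with hF
  have hFc' : ∀ p : Gd × Hd,
      (∫ z, PG.e z.1 p.1 * PH.e z.2 p.2 * F z ∂(μG.prod μH)) =
      PG.invFT μG g p.1 * PH.invFT μH h p.2 := by
    intro p
    have : (fun z : G × H => PG.e z.1 p.1 * PH.e z.2 p.2 * F z) =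
        fun z : G × H => (fun x => PG.e x p.1 * g x) z.1 * (fun y => PH.e y p.2 * h y) z.2 := by
      funext z
      simp only [hF]
      ring
    rw [this]
    exact MeasureTheory.integral_prod_mul (fun x => PG.e x p.1 * g x)
      (fun y => PH.e y p.2 * h y)
  have hFc : (fun p : Gd × Hd =>
      ∫ z, PG.e z.1 p.1 * PH.e z.2 p.2 * F z ∂(μG.prod μH)) =
      fun p => PG.invFT μG g p.1 * PH.invFT μH h p.2 := funext hFc'
  have hcF : Continuous F := (hgc.comp continuous_fst).mul (hhc.comp continuous_snd)
  have h0F : Tendsto F (cocompact (G × H)) (nhds 0) := aux_tendsto hg0 hh0 hgc hhc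
  have hWF : WNorm (fun p : I × J => fun q : G × H => φG p.1 q.1 * φH p.2 q.2) F < ⊤ := by
    rw [hF, aux_wnorm]
    exact ENNReal.mul_lt_top hgW hhW
  have hcFc : Continuous (fun p : Gd × Hd =>
      ∫ z, PG.e z.1 p.1 * PH.e z.2 p.2 * F z ∂(μG.prod μH)) := by
    rw [hFc]
    exact (hgc'.comp continuous_fst).mul (hhc'.comp continuous_snd)
  have h0Fc : Tendsto (fun p : Gd × Hd =>
      ∫ z, PG.e z.1 p.1 * PH.e z.2 p.2 * F z ∂(μG.prod μH))
      (cocompact (Gd × Hd)) (nhds 0) := by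
    rw [hFc]
    exact aux_tendsto hg0' hh0' hgc' hhc'
  have hWFc : WNorm (fun p : I' × J' => fun q : Gd × Hd => φGd p.1 q.1 * φHd p.2 q.2)
      (fun p : Gd × Hd => ∫ z, PG.e z.1 p.1 * PH.e z.2 p.2 * F z ∂(μG.prod μH)) < ⊤ := by
    rw [hFc, aux_wnorm]
    exact ENNReal.mul_lt_top hgW' hhW'
  obtain ⟨hS1, hS2, hEq⟩ := hPSF F hcF h0F hWF hcFc h0Fc hWFc
  refine ⟨?_, ?_, ?_⟩
  · simpa [hF, norm_mul, mul_comm] using hS1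
  · simp only [hFc'] at hS2
    simpa [norm_mul, mul_comm] using hS2
  · simp only [hFc'] at hEq
    calc (∑' l : L, h ((l : G × H)).2 * g ((l : G × H)).1)
        = ∑' l : L, F (l : G × H) := tsum_congr fun l => mul_comm _ _
      _ = (d : ℂ) * ∑' k : L0, PG.invFT μG g ((k : Gd × Hd)).1 *
            PH.invFT μH h ((k : Gd × Hd)).2 := hEq
      _ = (d : ℂ) * ∑' k : L0, PH.invFT μH h ((k : Gd × Hd)).2 *
            PG.invFT μG g ((k : Gd × Hd)).1 := by
          congr 1
          exact tsum_congr fun k => mul_comm _ _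
end
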